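/- Let μ₁ and μ₂ be Borel probability measures on ℝⁿ with finite first moments (∫‖x‖ dμᵢ(x) < ∞ for i = 1,2). Suppose there exists a Markov kernel K from ℝⁿ to ℝⁿ such that (i) for μ₁-almost every x, the measure K x has finite first moment and barycenter x, i.e. ∫ y d(K x)(y) = x, and (ii) μ₁.bind K = μ₂. Then μ₁ ⪯ μ₂ in convex order: for every convex function f : ℝⁿ → ℝ that is μ₂-integrable, f is μ₁-integrable and ∫ f dμ₁ ≤ ∫ f dμ₂. -/

import Mathlib

open MeasureTheory ProbabilityTheory

/-- A convex continuous function on a real normed space has an affine minorant,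
obtained by separating a point of the graph from the open strict epigraph. -/
lemma exists_affine_minorant {E : Type*} [NormedAddCommGroup E] [NormedSpace ℝ E]
    (f : E → ℝ) (hconv : ConvexOn ℝ Set.univ f) (hcont : Continuous f) :
    ∃ (L : E →L[ℝ] ℝ) (c : ℝ), ∀ y, L y + c ≤ f y := by
  set t : Set (E × ℝ) := {p | f p.1 < p.2} with ht
  have ht_open : IsOpen t := isOpen_lt (hcont.comp continuous_fst) continuous_snd
  have ht_conv : Convex ℝ t := by
    rintro p hp q hq a b ha hb hab
    simp only [ht, Set.mem_setOf_eq] at hp hq ⊢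
    have h1 : f (a • p.1 + b • q.1) ≤ a * f p.1 + b * f q.1 :=
      hconv.2 (Set.mem_univ _) (Set.mem_univ _) ha hb hab
    have h2 : a * f p.1 + b * f q.1 < a * p.2 + b * q.2 := by
      rcases eq_or_lt_of_le ha with h | h
      · have hb1 : b = 1 := by linarith
        simp [← h, hb1, hq]
      · have := mul_lt_mul_of_pos_left hp h
        have := mul_le_mul_of_nonneg_left hq.le hb
        linarith
    exact lt_of_le_of_lt h1 h2
  have hdis : ((0 : E), f 0) ∉ t := by simp [ht]
  obtain ⟨ℓ, hℓ⟩ := geometric_hahn_banach_point_open ht_conv ht_open hdis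
  have hsplit : ∀ (y : E) (s : ℝ), ℓ (y, s) = ℓ (y, 0) + s * ℓ (0, 1) := by
    intro y s
    have h : (y, s) = (y, (0 : ℝ)) + s • ((0 : E), (1 : ℝ)) := by
      simp [Prod.ext_iff]
    rw [h, map_add, ℓ.map_smul, smul_eq_mul]
  set c := ℓ ((0 : E), (1 : ℝ)) with hc
  have hcpos : 0 < c := by
    have h1 : ℓ (0, f 0) < ℓ (0, f 0 + 1) := hℓ _ (by simp [ht])
    have e1 := hsplit 0 (f 0)
    have e2 := hsplit 0 (f 0 + 1)
    nlinarith [h1, e1, e2]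
  have hmin : ∀ y, ℓ ((0 : E), f 0) ≤ ℓ (y, 0) + f y * c := by
    intro y
    refine le_of_forall_pos_lt_add fun ε hε => ?_
    have h1 : ℓ (0, f 0) < ℓ (y, f y + ε / c) := hℓ _ (by
      simp only [ht, Set.mem_setOf_eq]
      have : 0 < ε / c := div_pos hε hcpos
      linarith)
    have e1 := hsplit 0 (f 0)
    have e2 := hsplit y (f y + ε / c)
    have e3 : (f y + ε / c) * c = f y * c + ε := by field_simp
    linarith [h1, e1, e2, e3]
  refine ⟨(-(c⁻¹)) • ℓ.comp (ContinuousLinearMap.inl ℝ E ℝ), c⁻¹ * ℓ ((0 : E), f 0), fun y => ?_⟩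
  have h := hmin y
  have h2 : c⁻¹ * ℓ ((0 : E), f 0) ≤ c⁻¹ * (ℓ (y, 0) + f y * c) :=
    mul_le_mul_of_nonneg_left h (inv_nonneg.mpr hcpos.le)
  have h4 : c⁻¹ * (f y * c) = f y := by field_simp
  simp only [ContinuousLinearMap.smul_apply, ContinuousLinearMap.comp_apply,
    ContinuousLinearMap.inl_apply, smul_eq_mul]
  linarith [h2, h4]

/-- Theorem 1, Property 2 ⇒ Property 1.
If a Markov kernel `K` has barycenter `x` at `μ₁`-a.e. `x` and pushes `μ₁` to `μ₂`
(via `bind`), then `μ₁ ⪯ μ₂` in convex order. -/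
theorem strassen_kernel_implies_convex_order (n : ℕ)
    (μ₁ μ₂ : Measure (EuclideanSpace ℝ (Fin n)))
    [IsProbabilityMeasure μ₁] [IsProbabilityMeasure μ₂]
    (hmom₁ : Integrable (fun x => ‖x‖) μ₁)
    (hmom₂ : Integrable (fun x => ‖x‖) μ₂)
    (K : Kernel (EuclideanSpace ℝ (Fin n)) (EuclideanSpace ℝ (Fin n)))
    [IsMarkovKernel K]
    (hbary : ∀ᵐ x ∂μ₁, Integrable (fun y => y) (K x) ∧ (∫ y, y ∂(K x)) = x)
    (hbind : μ₁.bind (fun x => K x) = μ₂) :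
    ∀ f : EuclideanSpace ℝ (Fin n) → ℝ, ConvexOn ℝ Set.univ f → Integrable f μ₂ →
      Integrable f μ₁ ∧ (∫ x, f x ∂μ₁) ≤ ∫ x, f x ∂μ₂ := by
  intro f hconv hint
  have hcont : Continuous f := by
    rw [← continuousOn_univ]
    exact hconv.continuousOn isOpen_univ
  -- μ₂ is the pushforward of μ₁ ⊗ₘ K under the second projection
  have hmap : μ₂ = (μ₁ ⊗ₘ K).map Prod.snd := by
    rw [← hbind]
    ext s hs
    rw [Measure.map_apply measurable_snd hs,
      Measure.compProd_apply (measurable_snd hs),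
      Measure.bind_apply hs K.measurable.aemeasurable]
    rfl
  -- integrability of f ∘ snd on the product
  have hintc : Integrable (fun p : EuclideanSpace ℝ (Fin n) × EuclideanSpace ℝ (Fin n) => f p.2)
      (μ₁ ⊗ₘ K) := by
    rw [hmap] at hint
    exact (integrable_map_measure hcont.aestronglyMeasurable
      measurable_snd.aemeasurable).mp hint
  have h2 := (Measure.integrable_compProd_iff hintc.aestronglyMeasurable).mp hintc
  -- strong measurability of the kernel integral
  have hgm : AEStronglyMeasurable (fun x => ∫ y, f y ∂(K x)) μ₁ := by
    have : StronglyMeasurable (fun x => ∫ y, f y ∂(K x)) := by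
      exact (MeasureTheory.StronglyMeasurable.integral_kernel_prod_right'
        (κ := K) (hcont.comp continuous_snd).stronglyMeasurable)
    exact this.aestronglyMeasurable
  have hg_int : Integrable (fun x => ∫ y, f y ∂(K x)) μ₁ :=
    h2.2.mono' hgm (Filter.Eventually.of_forall fun x => by
      simpa using norm_integral_le_integral_norm (μ := K x) f)
  -- Jensen's inequality pointwise a.e.
  have hjen : ∀ᵐ x ∂μ₁, f x ≤ ∫ y, f y ∂(K x) := by
    filter_upwards [hbary, h2.1] with x hx hfi
    haveI : IsProbabilityMeasure (K x) := IsMarkovKernel.isProbabilityMeasure x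
    have := hconv.map_integral_le (hcont.continuousOn) isClosed_univ
      (Filter.Eventually.of_forall fun _ => Set.mem_univ _) hx.1 hfi
    rwa [hx.2] at this
  -- affine minorant for integrability from below
  obtain ⟨L, c, hLc⟩ := exists_affine_minorant f hconv hcont
  have hid : Integrable (fun x : EuclideanSpace ℝ (Fin n) => x) μ₁ :=
    (integrable_norm_iff aestronglyMeasurable_id).mp hmom₁
  have hL_int : Integrable (fun x => L x + c) μ₁ :=
    (L.integrable_comp hid).add (integrable_const c)
  have hf_int : Integrable f μ₁ := by
    refine Integrable.mono' (hg_int.norm.add hL_int.norm) hcont.aestronglyMeasurable ?_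
    filter_upwards [hjen] with x hx
    simp only [Real.norm_eq_abs, Pi.add_apply]
    rw [abs_le]
    constructor
    · have h1 := hLc x
      have h2 := neg_abs_le (L x + c)
      have h3 := abs_nonneg (∫ y, f y ∂(K x))
      linarith
    · have h1 := le_abs_self (∫ y, f y ∂(K x))
      have h2 := abs_nonneg (L x + c)
      linarith
  refine ⟨hf_int, ?_⟩
  have heq : ∫ x, f x ∂μ₂ = ∫ x, ∫ y, f y ∂(K x) ∂μ₁ := by
    rw [hmap, integral_map measurable_snd.aemeasurable hcont.aestronglyMeasurable,
      Measure.integral_compProd hintc]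
  rw [heq]
  exact integral_mono_ae hf_int hg_int hjen
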